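/- Let n be a positive integer, let i be an integer with 1 ≤ i ≤ ⌈n/2⌉, let c > 4 be a real number, and let t be a positive integer with n²/c ≤ t ≤ n²/4. Then Pr_i^t[MIN(w) ≥ 1] ≥ e^{−1−c} · i/n, where e is Euler's number. -/

import Mathlib

set_option maxHeartbeats 1000000
open Stirling Filter Nat


/-- A 1D walk of length `t` started at `i`: a function on `{0,…,t}` starting at `i`
whose consecutive values differ by exactly `1`. -/
def IsWalk (i : ℤ) (t : ℕ) (w : Fin (t + 1) → ℤ) : Prop :=
  w 0 = i ∧ ∀ j : Fin t, |w j.succ - w j.castSucc| = 1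

/-- The number of walks of length `t` started at `i` satisfying `P`. -/
noncomputable def walkCount (i : ℤ) (t : ℕ) (P : (Fin (t + 1) → ℤ) → Prop) : ℕ :=
  {w : Fin (t + 1) → ℤ | IsWalk i t w ∧ P w}.ncard

/-- `Pr_i^t[P]`: the number of walks of length `t` started at `i` satisfying `P`,
divided by `2 ^ t`. -/
noncomputable def walkProb (i : ℤ) (t : ℕ) (P : (Fin (t + 1) → ℤ) → Prop) : ℝ :=
  (walkCount i t P : ℝ) / 2 ^ t

/-- `w(t) = n`. -/
def endsAt {t : ℕ} (n : ℤ) (w : Fin (t + 1) → ℤ) : Prop := w (Fin.last t) = n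

/-- `MAX(w) = n`. -/
def maxEq {t : ℕ} (n : ℤ) (w : Fin (t + 1) → ℤ) : Prop :=
  (∀ j, w j ≤ n) ∧ ∃ j, w j = n

/-- `MIN(w) ≥ m`. -/
def minGE {t : ℕ} (m : ℤ) (w : Fin (t + 1) → ℤ) : Prop := ∀ j, m ≤ w j



lemma sqrt_pi_le_stirlingSeq (n : ℕ) : Real.sqrt Real.pi ≤ stirlingSeq (n+1) := by
  have h : Filter.Tendsto (stirlingSeq ∘ Nat.succ) atTop (nhds (Real.sqrt Real.pi)) :=
    tendsto_stirlingSeq_sqrt_pi.comp (tendsto_add_atTop_nat 1)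
  exact stirlingSeq'_antitone.le_of_tendsto h n

lemma factorial_stirling_lower (m : ℕ) :
    Real.sqrt Real.pi * (Real.sqrt (2*m) * ((m:ℝ) / Real.exp 1)^m) ≤ (m ! : ℝ) := by
  rcases m with _ | k
  · simp
  have h2 := sqrt_pi_le_stirlingSeq k
  rw [stirlingSeq] at h2
  have hpos : 0 < Real.sqrt (2 * ((k+1:ℕ)) : ℝ) * (((k+1:ℕ):ℝ) / Real.exp 1) ^ (k+1) := by
    have : (0:ℝ) < ((k+1:ℕ):ℝ) := by positivity
    positivity
  rw [le_div_iff₀ hpos] at h2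
  linarith [h2]

lemma factorial_stirling_upper (m : ℕ) (hm : 1 ≤ m) :
    (m ! : ℝ) ≤ Real.exp 1 * (Real.sqrt m * ((m:ℝ) / Real.exp 1)^m) := by
  rcases m with _ | k
  · omega
  have h1 : stirlingSeq (k+1) ≤ stirlingSeq 1 := by
    have := stirlingSeq'_antitone (Nat.zero_le k)
    simpa [Function.comp] using this
  rw [stirlingSeq_one, stirlingSeq] at h1
  have hpos : 0 < Real.sqrt (2 * ((k+1:ℕ)) : ℝ) * (((k+1:ℕ):ℝ) / Real.exp 1) ^ (k+1) := by
    have : (0:ℝ) < ((k+1:ℕ):ℝ) := by positivity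
    positivity
  rw [div_le_iff₀ hpos] at h1
  -- (e/√2) * (√(2m) * X) = e * √m * X
  have hsq : Real.sqrt (2 * ((k+1:ℕ)) : ℝ) = Real.sqrt 2 * Real.sqrt ((k+1:ℕ)) :=
    Real.sqrt_mul (by norm_num) _
  have h2 : (0:ℝ) < Real.sqrt 2 := by positivity
  calc ((k+1)! : ℝ) ≤ Real.exp 1 / Real.sqrt 2 * (Real.sqrt (2 * ((k+1:ℕ)) : ℝ) * (((k+1:ℕ):ℝ) / Real.exp 1) ^ (k+1)) := h1
    _ = Real.exp 1 * (Real.sqrt ((k+1:ℕ)) * (((k+1:ℕ):ℝ) / Real.exp 1)^(k+1)) := by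
        rw [hsq]; field_simp

lemma exp_one_sq_le : Real.exp 1 ^ 2 ≤ 4 * Real.sqrt (2 * Real.pi) := by
  have h1 : Real.exp 1 ≤ 2.7182818286 := le_of_lt Real.exp_one_lt_d9
  have h2 : (2.4:ℝ) ≤ Real.sqrt (2 * Real.pi) := by
    rw [show (2.4:ℝ) = Real.sqrt (2.4^2) by rw [Real.sqrt_sq]; norm_num]
    apply Real.sqrt_le_sqrt
    nlinarith [Real.pi_gt_three]
  nlinarith [Real.exp_pos 1]

/-- Core Stirling-based bound: for `u+v = t`, `u,v ≥ 1`,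
`choose t u ≥ √π √(2t) / (e² √u √v) * t^t/(u^u v^v)`. -/
lemma choose_stirling (t u v : ℕ) (hu : 1 ≤ u) (hv : 1 ≤ v) (huv : u + v = t) :
    Real.sqrt Real.pi * Real.sqrt (2*t) / (Real.exp 1 ^ 2 * Real.sqrt u * Real.sqrt v)
      * ((t:ℝ)^t / ((u:ℝ)^u * (v:ℝ)^v)) ≤ (t.choose u : ℝ) := by
  have hut : u ≤ t := by omega
  have hfact : (t.choose u : ℝ) * (u ! : ℝ) * (v ! : ℝ) = (t ! : ℝ) := by
    have := Nat.choose_mul_factorial_mul_factorial hut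
    rw [show t - u = v by omega] at this
    exact_mod_cast congrArg (Nat.cast : ℕ → ℝ) this
  have hE : (0:ℝ) < Real.exp 1 := Real.exp_pos 1
  have hu0 : (0:ℝ) < (u:ℝ) := by exact_mod_cast hu
  have hv0 : (0:ℝ) < (v:ℝ) := by exact_mod_cast hv
  have ht0 : (0:ℝ) < (t:ℝ) := by
    have h1t : 0 < t := by omega
    exact_mod_cast h1t
  have hufa : (0:ℝ) < (u ! : ℝ) := by exact_mod_cast Nat.factorial_pos u
  have hvfa : (0:ℝ) < (v ! : ℝ) := by exact_mod_cast Nat.factorial_pos v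
  -- lower bound for t!, upper for u!, v!
  have hlt := factorial_stirling_lower t
  have hlu := factorial_stirling_upper u hu
  have hlv := factorial_stirling_upper v hv
  have hchoose : (t.choose u : ℝ) = (t ! : ℝ) / ((u ! : ℝ) * (v ! : ℝ)) := by
    field_simp at hfact ⊢; linarith [hfact]
  rw [hchoose]
  have hub : (0:ℝ) < Real.exp 1 * (Real.sqrt u * ((u:ℝ) / Real.exp 1)^u) := by positivity
  have hvb : (0:ℝ) < Real.exp 1 * (Real.sqrt v * ((v:ℝ) / Real.exp 1)^v) := by positivity
  have step : Real.sqrt Real.pi * (Real.sqrt (2*t) * ((t:ℝ) / Real.exp 1)^t) /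
      ((Real.exp 1 * (Real.sqrt u * ((u:ℝ) / Real.exp 1)^u)) *
       (Real.exp 1 * (Real.sqrt v * ((v:ℝ) / Real.exp 1)^v)))
      ≤ (t ! : ℝ) / ((u ! : ℝ) * (v ! : ℝ)) := by
    apply div_le_div₀ (le_of_lt (lt_of_lt_of_le (by positivity) hlt)) hlt (by positivity)
    exact mul_le_mul hlu hlv (le_of_lt hvfa) (le_of_lt hub)
  refine le_trans (le_of_eq ?_) step
  have hEt : Real.exp 1 ^ u * Real.exp 1 ^ v = Real.exp 1 ^ t := by
    rw [← pow_add, huv]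
  field_simp
  ring_nf
  rw [show (Real.exp 1)⁻¹ ^ t = (Real.exp 1)⁻¹ ^ u * (Real.exp 1)⁻¹ ^ v by
        rw [← pow_add, huv]]
  ring

lemma choose_bound_aux (n i t u : ℕ) (c : ℝ) (hn : 2 ≤ n) (hi2 : 2*i ≤ n+1) (hc : 4 < c)
    (ht0 : 0 < t) (hct : (n:ℝ)^2 ≤ c * t) (ht2 : (t:ℝ) ≤ (n:ℝ)^2/4)
    (hut : u ≤ t) (htu : t ≤ 2*u) (hd : 2*u - t ≤ i) :
    Real.exp (-1-c) / n * 2^t ≤ (t.choose u : ℝ) := by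
  have hn0 : (0:ℝ) < n := by positivity
  have htR : (0:ℝ) < t := by exact_mod_cast ht0
  obtain ⟨d, hdd⟩ : ∃ d, d = 2*u - t := ⟨2*u - t, rfl⟩
  have hd' : d ≤ i := by omega
  rcases lt_or_ge t (2*d) with hcase | hcase
  · -- degenerate case: t < 2d ≤ 2i ≤ n+1, trivial bound choose ≥ 1
    have htn : t ≤ n := by omega
    have hcn : (n:ℝ) ≤ c := by
      have htnR : (t:ℝ) ≤ n := by exact_mod_cast htn
      nlinarith
    have htc : (t:ℝ) ≤ c := le_trans (by exact_mod_cast htn) hcn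
    have h2t : (2:ℝ)^t ≤ Real.exp c := by
      calc (2:ℝ)^t ≤ Real.exp 1 ^ t := by
            apply pow_le_pow_left₀ (by norm_num)
            linarith [Real.add_one_le_exp (1:ℝ)]
        _ = Real.exp t := by rw [← Real.exp_nat_mul]; norm_num
        _ ≤ Real.exp c := Real.exp_le_exp.2 htc
    have hch : (1:ℝ) ≤ (t.choose u : ℝ) := by
      exact_mod_cast Nat.succ_le_of_lt (Nat.choose_pos hut)
    have hn1 : (1:ℝ) ≤ n := by exact_mod_cast (by omega : 1 ≤ n)
    calc Real.exp (-1-c) / n * 2^t ≤ Real.exp (-1-c) * Real.exp c := by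
          rw [div_mul_eq_mul_div, div_le_iff₀ hn0]
          calc Real.exp (-1-c) * 2^t ≤ Real.exp (-1-c) * Real.exp c :=
                mul_le_mul_of_nonneg_left h2t (le_of_lt (Real.exp_pos _))
            _ ≤ Real.exp (-1-c) * Real.exp c * n := by nlinarith [Real.exp_pos (-1-c), Real.exp_pos c, mul_pos (Real.exp_pos (-1-c)) (Real.exp_pos c)]
      _ = Real.exp (-1) := by rw [← Real.exp_add]; ring_nf
      _ ≤ 1 := by rw [Real.exp_le_one_iff]; norm_num
      _ ≤ (t.choose u : ℝ) := hch
  · -- main case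
    obtain ⟨v, huv⟩ : ∃ v, u + v = t := ⟨t - u, by omega⟩
    have hu1 : 1 ≤ u := by omega
    have hv1 : 1 ≤ v := by omega
    have hdd2 : 2*u = t + d := by omega
    have hdI : d ≤ i := hd'
    have hcase2 : 2*d ≤ t := hcase
    have hRuv : (u:ℝ) + v = t := by exact_mod_cast huv
    have huvd : (u:ℝ) - v = d := by
      have : (2*u:ℝ) = t + d := by exact_mod_cast hdd2
      linarith
    have hdt : 2*(d:ℝ) ≤ t := by exact_mod_cast hcase2
    have hd0 : (0:ℝ) ≤ d := by positivity
    have hu0 : (0:ℝ) < u := by exact_mod_cast hu1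
    have hv0 : (0:ℝ) < v := by exact_mod_cast hv1
    have hd2c : (d:ℝ)^2 ≤ c * t := by
      have h2d : 2*(d:ℝ) ≤ n+1 := by
        have h2d' : 2*d ≤ n+1 := by omega
        exact_mod_cast h2d'
      have hnR : (2:ℝ) ≤ n := by exact_mod_cast hn
      nlinarith
    have hsu : (0:ℝ) < Real.sqrt u := Real.sqrt_pos.2 hu0
    have hsv : (0:ℝ) < Real.sqrt v := Real.sqrt_pos.2 hv0
    have hsuv : Real.sqrt u * Real.sqrt v ≤ (t:ℝ)/2 := by
      rw [← Real.sqrt_mul (le_of_lt hu0)]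
      have h1 : (u:ℝ)*v ≤ ((t:ℝ)/2)^2 := by nlinarith [sq_nonneg ((u:ℝ) - v)]
      calc Real.sqrt ((u:ℝ)*v) ≤ Real.sqrt (((t:ℝ)/2)^2) := Real.sqrt_le_sqrt h1
        _ = (t:ℝ)/2 := Real.sqrt_sq (by positivity)
    have hst : Real.sqrt t ≤ (n:ℝ)/2 := by
      calc Real.sqrt t ≤ Real.sqrt (((n:ℝ)/2)^2) := Real.sqrt_le_sqrt (by nlinarith)
        _ = (n:ℝ)/2 := Real.sqrt_sq (by positivity)
    set x : ℝ := (d:ℝ)/t with hxx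
    have hx0 : 0 ≤ x := by positivity
    have hx12 : x ≤ 1/2 := by rw [hxx, div_le_iff₀ htR]; linarith
    have h2u : (2*(u:ℝ)) = t*(1+x) := by
      rw [hxx]
      field_simp
      linarith
    have h2v : (2*(v:ℝ)) = t*(1-x) := by
      rw [hxx]
      field_simp
      linarith
    -- key1 : u^u * v^v * 2^t ≤ t^t * exp (1+c)
    have key1 : (u:ℝ)^u * (v:ℝ)^v * 2^t ≤ (t:ℝ)^t * Real.exp (1+c) := by
      have e1 : (u:ℝ)^u * (v:ℝ)^v * 2^t = (2*(u:ℝ))^u * (2*(v:ℝ))^v := by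
        rw [← huv, pow_add, mul_pow, mul_pow]; ring
      have e2 : (2*(u:ℝ))^u ≤ ((t:ℝ)*Real.exp x)^u := by
        apply pow_le_pow_left₀ (by positivity)
        rw [h2u]
        apply mul_le_mul_of_nonneg_left _ (le_of_lt htR)
        linarith [Real.add_one_le_exp x]
      have e3 : (2*(v:ℝ))^v ≤ ((t:ℝ)*Real.exp (-x))^v := by
        apply pow_le_pow_left₀ (by positivity)
        rw [h2v]
        apply mul_le_mul_of_nonneg_left _ (le_of_lt htR)
        linarith [Real.add_one_le_exp (-x)]
      have e4 : ((t:ℝ)*Real.exp x)^u * ((t:ℝ)*Real.exp (-x))^v = (t:ℝ)^t * Real.exp ((d:ℝ)*x) := by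
        rw [mul_pow, mul_pow, ← Real.exp_nat_mul, ← Real.exp_nat_mul]
        have htt : (t:ℝ)^u * (t:ℝ)^v = (t:ℝ)^t := by rw [← pow_add, huv]
        calc (t:ℝ)^u * Real.exp (u*x) * ((t:ℝ)^v * Real.exp (v*(-x)))
            = ((t:ℝ)^u * (t:ℝ)^v) * (Real.exp ((u:ℝ)*x) * Real.exp ((v:ℝ)*(-x))) := by ring
          _ = (t:ℝ)^t * Real.exp ((d:ℝ)*x) := by
              rw [htt, ← Real.exp_add]
              congr 1
              rw [← huvd]; ring
      have e5 : Real.exp ((d:ℝ)*x) ≤ Real.exp (1+c) := by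
        rw [Real.exp_le_exp]
        have hdx : (d:ℝ)*x = (d:ℝ)^2/t := by rw [hxx]; ring
        rw [hdx, div_le_iff₀ htR]
        nlinarith
      calc (u:ℝ)^u * (v:ℝ)^v * 2^t = (2*(u:ℝ))^u * (2*(v:ℝ))^v := e1
        _ ≤ ((t:ℝ)*Real.exp x)^u * ((t:ℝ)*Real.exp (-x))^v :=
            mul_le_mul e2 e3 (by positivity) (by positivity)
        _ = (t:ℝ)^t * Real.exp ((d:ℝ)*x) := e4
        _ ≤ (t:ℝ)^t * Real.exp (1+c) :=
            mul_le_mul_of_nonneg_left e5 (by positivity)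
    -- key2 : 1/n ≤ the sqrt prefactor
    have key2 : 1/(n:ℝ) ≤ Real.sqrt Real.pi * Real.sqrt (2*t) /
        (Real.exp 1 ^ 2 * Real.sqrt u * Real.sqrt v) := by
      rw [div_le_div_iff₀ hn0 (by positivity)]
      have h2t : Real.sqrt (2*(t:ℝ)) = Real.sqrt 2 * Real.sqrt t :=
        Real.sqrt_mul (by norm_num) _
      have h2pi : Real.sqrt (2*Real.pi) = Real.sqrt 2 * Real.sqrt Real.pi :=
        Real.sqrt_mul (by norm_num) _
      have hE := exp_one_sq_le
      rw [h2pi] at hE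
      have hsp : (0:ℝ) < Real.sqrt Real.pi := Real.sqrt_pos.2 Real.pi_pos
      have hs2 : (0:ℝ) < Real.sqrt 2 := by positivity
      have hstp : (0:ℝ) ≤ Real.sqrt t := Real.sqrt_nonneg _
      have htsq : Real.sqrt t * Real.sqrt t = t := Real.mul_self_sqrt (le_of_lt htR)
      rw [h2t]
      have step1 : Real.exp 1 ^ 2 * Real.sqrt u * Real.sqrt v ≤
          (4 * (Real.sqrt 2 * Real.sqrt Real.pi)) * ((t:ℝ)/2) := by
        rw [mul_assoc]
        apply mul_le_mul hE hsuv (by positivity) (by positivity)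
      have step2 : (4 * (Real.sqrt 2 * Real.sqrt Real.pi)) * ((t:ℝ)/2) ≤
          Real.sqrt Real.pi * (Real.sqrt 2 * Real.sqrt t) * n := by
        nlinarith [mul_pos hs2 hsp, mul_nonneg (mul_nonneg (le_of_lt hs2) (le_of_lt hsp)) hstp]
      linarith
    -- combine
    have hQ : Real.exp (-1-c) * 2^t ≤ (t:ℝ)^t / ((u:ℝ)^u * (v:ℝ)^v) := by
      rw [le_div_iff₀ (by positivity)]
      calc Real.exp (-1-c) * 2^t * ((u:ℝ)^u * (v:ℝ)^v)
          = Real.exp (-1-c) * ((u:ℝ)^u * (v:ℝ)^v * 2^t) := by ring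
        _ ≤ Real.exp (-1-c) * ((t:ℝ)^t * Real.exp (1+c)) :=
            mul_le_mul_of_nonneg_left key1 (le_of_lt (Real.exp_pos _))
        _ = (t:ℝ)^t := by
            rw [show Real.exp (-1-c) * ((t:ℝ)^t * Real.exp (1+c))
                = (t:ℝ)^t * (Real.exp (-1-c) * Real.exp (1+c)) from by ring,
              ← Real.exp_add]
            norm_num
    calc Real.exp (-1-c) / n * 2^t = (1/(n:ℝ)) * (Real.exp (-1-c) * 2^t) := by ring
      _ ≤ (Real.sqrt Real.pi * Real.sqrt (2*t) / (Real.exp 1 ^ 2 * Real.sqrt u * Real.sqrt v))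
            * ((t:ℝ)^t / ((u:ℝ)^u * (v:ℝ)^v)) := by
          have hq1 : (0:ℝ) ≤ Real.exp (-1-c) * 2^t := by positivity
          have hq2 : (0:ℝ) ≤ Real.sqrt Real.pi * Real.sqrt (2*t) /
              (Real.exp 1 ^ 2 * Real.sqrt u * Real.sqrt v) := by positivity
          exact mul_le_mul key2 hQ hq1 hq2
      _ ≤ (t.choose u : ℝ) := choose_stirling t u v hu1 hv1 huv


lemma choose_bound (n i t u : ℕ) (c : ℝ) (hn : 2 ≤ n) (hi2 : 2*i ≤ n+1) (hc : 4 < c)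
    (ht0 : 0 < t) (hct : (n:ℝ)^2 ≤ c * t) (ht2 : (t:ℝ) ≤ (n:ℝ)^2/4)
    (hut : u ≤ t) (hd1 : t < 2*u + i) (hd2 : 2*u ≤ t + i) :
    Real.exp (-1-c) / n * 2^t ≤ (t.choose u : ℝ) := by
  rcases le_or_gt t (2*u) with h | h
  · exact choose_bound_aux n i t u c hn hi2 hc ht0 hct ht2 hut h (by omega)
  · rw [← Nat.choose_symm hut]
    exact choose_bound_aux n i t (t-u) c hn hi2 hc ht0 hct ht2 (by omega) (by omega) (by omega)


/-- step `k` of the walk encoded by `s`. -/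
def stepZ (t : ℕ) (s : Finset (Fin t)) (k : ℕ) : ℤ :=
  if h : k < t then (if (⟨k, h⟩ : Fin t) ∈ s then 1 else -1) else 0

/-- the walk encoded by the set of up-steps `s`. -/
def walkOf (i : ℤ) (t : ℕ) (s : Finset (Fin t)) : Fin (t+1) → ℤ :=
  fun j => i + ∑ k ∈ Finset.range (j : ℕ), stepZ t s k

lemma walkOf_zero (i : ℤ) (t : ℕ) (s : Finset (Fin t)) : walkOf i t s 0 = i := by
  simp [walkOf]

lemma walkOf_succ (i : ℤ) (t : ℕ) (s : Finset (Fin t)) (j : Fin t) :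
    walkOf i t s j.succ = walkOf i t s j.castSucc + stepZ t s j := by
  simp only [walkOf, Fin.val_succ, Fin.coe_castSucc, Finset.sum_range_succ]
  ring

lemma stepZ_abs (t : ℕ) (s : Finset (Fin t)) (k : ℕ) (h : k < t) : |stepZ t s k| = 1 := by
  simp only [stepZ, dif_pos h]
  split <;> norm_num

lemma isWalk_walkOf (i : ℤ) (t : ℕ) (s : Finset (Fin t)) : IsWalk i t (walkOf i t s) := by
  refine ⟨walkOf_zero i t s, fun j => ?_⟩
  rw [walkOf_succ]
  simpa using stepZ_abs t s j j.isLt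

lemma walkOf_injective (i : ℤ) (t : ℕ) : Function.Injective (walkOf i t) := by
  intro s s' h
  ext k
  have h1 : walkOf i t s k.succ = walkOf i t s' k.succ := by rw [h]
  have h2 : walkOf i t s k.castSucc = walkOf i t s' k.castSucc := by rw [h]
  rw [walkOf_succ, walkOf_succ, h2] at h1
  have h3 := add_left_cancel h1
  simp only [stepZ, dif_pos k.isLt] at h3
  rename' h3 => h1
  by_cases hk : k ∈ s <;> by_cases hk' : k ∈ s' <;>
    simp_all [Fin.eta] <;> omega

lemma walkOf_surj (i : ℤ) (t : ℕ) (w : Fin (t+1) → ℤ) (hw : IsWalk i t w) :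
    ∃ s, walkOf i t s = w := by
  classical
  refine ⟨Finset.univ.filter (fun k : Fin t => w k.succ - w k.castSucc = 1), ?_⟩
  funext j
  obtain ⟨m, hm⟩ := j
  induction m with
  | zero =>
      have : (⟨0, hm⟩ : Fin (t+1)) = 0 := rfl
      rw [this, walkOf_zero, hw.1]
  | succ m ih =>
      have hmt : m < t := by omega
      have hm1 : m < t + 1 := by omega
      have hsucc : (⟨m+1, hm⟩ : Fin (t+1)) = (⟨m, hmt⟩ : Fin t).succ := rfl
      have hcast : (⟨m, hm1⟩ : Fin (t+1)) = (⟨m, hmt⟩ : Fin t).castSucc := rfl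
      rw [hsucc, walkOf_succ]
      rw [← hcast, ih hm1]
      have habs := hw.2 ⟨m, hmt⟩
      rw [abs_eq (by norm_num : (0:ℤ) ≤ 1)] at habs
      simp only [stepZ, dif_pos hmt, Finset.mem_filter, Finset.mem_univ, true_and]
      simp only [Fin.succ_mk, Fin.castSucc_mk] at habs ⊢
      rcases habs with hh | hh
      · rw [if_pos hh]; omega
      · rw [if_neg (by rw [hh]; norm_num)]; omega

open scoped Classical in
lemma walkCount_eq (i : ℤ) (t : ℕ) (P : (Fin (t + 1) → ℤ) → Prop) :
    walkCount i t P = (Finset.univ.filter (fun s : Finset (Fin t) => P (walkOf i t s))).card := by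
  classical
  have hset : {w : Fin (t + 1) → ℤ | IsWalk i t w ∧ P w}
      = walkOf i t '' {s | P (walkOf i t s)} := by
    ext w
    constructor
    · rintro ⟨hw, hP⟩
      obtain ⟨s, rfl⟩ := walkOf_surj i t w hw
      exact ⟨s, hP, rfl⟩
    · rintro ⟨s, hs, rfl⟩
      exact ⟨isWalk_walkOf i t s, hs⟩
  rw [walkCount, hset, Set.ncard_image_of_injective _ (walkOf_injective i t)]
  rw [Set.ncard_eq_toFinset_card']
  congr 1
  ext s
  simp

/-- positivity of the walk from positivity of start and absence of zeros -/
lemma walkOf_pos (i : ℤ) (hi : 1 ≤ i) (t : ℕ) (s : Finset (Fin t))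
    (h : ∀ j, walkOf i t s j ≠ 0) : ∀ j, 1 ≤ walkOf i t s j := by
  intro j
  obtain ⟨m, hm⟩ := j
  induction m with
  | zero => simpa [walkOf] using hi
  | succ m ih =>
      have hm1 : m < t + 1 := by omega
      have hmt : m < t := by omega
      have ih' := ih hm1
      have hstep : |stepZ t s m| = 1 := by
        simp only [stepZ, dif_pos hmt]
        split <;> norm_num
      have hne := h ⟨m+1, hm⟩
      have hw : walkOf i t s ⟨m+1, hm⟩ = walkOf i t s ⟨m, hm1⟩ + stepZ t s m := by
        simp only [walkOf, Finset.sum_range_succ]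
        ring
      rw [hw] at hne ⊢
      rw [abs_eq (by norm_num : (0:ℤ) ≤ 1)] at hstep
      omega

def flipSet (t : ℕ) (m : Fin (t+1)) : Finset (Fin t) :=
  Finset.univ.filter (fun k : Fin t => (m:ℕ) ≤ (k:ℕ))

lemma stepZ_flip (t : ℕ) (s : Finset (Fin t)) (m : Fin (t+1)) (k : ℕ) :
    stepZ t (symmDiff s (flipSet t m)) k = if k < (m:ℕ) then stepZ t s k else - stepZ t s k := by
  by_cases hk : k < t
  · simp only [stepZ, dif_pos hk]
    have hfs : ((⟨k, hk⟩ : Fin t) ∈ flipSet t m) ↔ (m:ℕ) ≤ k := by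
      simp [flipSet]
    rcases lt_or_ge k (m:ℕ) with h2 | h2
    · rw [if_pos h2]
      have hmem : (⟨k, hk⟩ : Fin t) ∈ symmDiff s (flipSet t m) ↔ (⟨k, hk⟩ : Fin t) ∈ s := by
        rw [Finset.mem_symmDiff, hfs]
        constructor
        · rintro (⟨h3, _⟩ | ⟨h3, _⟩)
          · exact h3
          · omega
        · intro h3
          exact Or.inl ⟨h3, by omega⟩
      simp only [hmem]
    · rw [if_neg (not_lt.2 h2)]
      have hmem : (⟨k, hk⟩ : Fin t) ∈ symmDiff s (flipSet t m) ↔ ¬ ((⟨k, hk⟩ : Fin t) ∈ s) := by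
        rw [Finset.mem_symmDiff, hfs]
        constructor
        · rintro (⟨_, h3⟩ | ⟨_, h3⟩)
          · omega
          · exact h3
        · intro h3
          exact Or.inr ⟨h2, h3⟩
      simp only [hmem]
      by_cases h1 : (⟨k, hk⟩ : Fin t) ∈ s <;> simp [h1]
  · have hmk : ¬ (k < (m:ℕ)) := by
      have := m.isLt
      omega
    simp only [stepZ, dif_neg hk, if_neg hmk, neg_zero]

lemma walkOf_flip_le (i : ℤ) (t : ℕ) (s : Finset (Fin t)) (m : Fin (t+1))
    (j : Fin (t+1)) (hj : (j:ℕ) ≤ (m:ℕ)) :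
    walkOf i t (symmDiff s (flipSet t m)) j = walkOf i t s j := by
  unfold walkOf
  congr 1
  apply Finset.sum_congr rfl
  intro k hk
  rw [Finset.mem_range] at hk
  rw [stepZ_flip, if_pos (by omega)]

lemma walkOf_flip_ge (i : ℤ) (t : ℕ) (s : Finset (Fin t)) (m : Fin (t+1))
    (hm0 : walkOf i t s m = 0)
    (j : Fin (t+1)) (hj : (m:ℕ) ≤ (j:ℕ)) :
    walkOf i t (symmDiff s (flipSet t m)) j = - walkOf i t s j := by
  have hsplit : ∀ (f : ℕ → ℤ), ∑ k ∈ Finset.range (m:ℕ), f k + ∑ k ∈ Finset.Ico (m:ℕ) (j:ℕ), f k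
      = ∑ k ∈ Finset.range (j:ℕ), f k := by
    intro f
    simp only [Finset.range_eq_Ico]
    exact Finset.sum_Ico_consecutive f (Nat.zero_le _) hj
  have hm' : i + ∑ k ∈ Finset.range (m:ℕ), stepZ t s k = 0 := hm0
  have hflipm : ∑ k ∈ Finset.range (m:ℕ), stepZ t (symmDiff s (flipSet t m)) k
      = ∑ k ∈ Finset.range (m:ℕ), stepZ t s k := by
    apply Finset.sum_congr rfl
    intro k hk
    rw [Finset.mem_range] at hk
    rw [stepZ_flip, if_pos hk]
  have hflipIco : ∑ k ∈ Finset.Ico (m:ℕ) (j:ℕ), stepZ t (symmDiff s (flipSet t m)) k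
      = - ∑ k ∈ Finset.Ico (m:ℕ) (j:ℕ), stepZ t s k := by
    rw [← Finset.sum_neg_distrib]
    apply Finset.sum_congr rfl
    intro k hk
    rw [Finset.mem_Ico] at hk
    rw [stepZ_flip, if_neg (by omega)]
  have e1 := hsplit (stepZ t s)
  have e2 := hsplit (stepZ t (symmDiff s (flipSet t m)))
  unfold walkOf
  rw [← e2, hflipm, hflipIco]
  unfold walkOf at hm'
  rw [← e1]
  linarith

noncomputable def zeroSet (i : ℤ) (t : ℕ) (s : Finset (Fin t)) : Finset (Fin (t+1)) :=
  Finset.univ.filter (fun j : Fin (t+1) => walkOf i t s j = 0)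

noncomputable def reflect (i : ℤ) (t : ℕ) (s : Finset (Fin t)) : Finset (Fin t) :=
  if h : (zeroSet i t s).Nonempty
  then symmDiff s (flipSet t ((zeroSet i t s).min' h))
  else s

lemma reflect_spec (i : ℤ) (t : ℕ) (s : Finset (Fin t)) (hz : ∃ j, walkOf i t s j = 0) :
    (walkOf i t (reflect i t s) (Fin.last t) = - walkOf i t s (Fin.last t)) ∧
    reflect i t (reflect i t s) = s := by
  classical
  have hne : (zeroSet i t s).Nonempty := by
    obtain ⟨j, hj⟩ := hz
    exact ⟨j, by simp [zeroSet, hj]⟩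
  set m := (zeroSet i t s).min' hne with hmdef
  have hm0 : walkOf i t s m = 0 := by
    have := (zeroSet i t s).min'_mem hne
    exact (Finset.mem_filter.1 this).2
  have hrefl : reflect i t s = symmDiff s (flipSet t m) := dif_pos hne
  have hzero : ∀ j, walkOf i t (reflect i t s) j = 0 ↔ walkOf i t s j = 0 := by
    intro j
    rcases le_total (j:ℕ) (m:ℕ) with hj | hj
    · rw [hrefl, walkOf_flip_le i t s m j hj]
    · rw [hrefl, walkOf_flip_ge i t s m hm0 j hj]
      omega
  have hZeq : zeroSet i t (reflect i t s) = zeroSet i t s := by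
    ext j
    simp [zeroSet, hzero j]
  have hne2 : (zeroSet i t (reflect i t s)).Nonempty := by rw [hZeq]; exact hne
  have hlast : walkOf i t (reflect i t s) (Fin.last t) = - walkOf i t s (Fin.last t) := by
    rw [hrefl]
    apply walkOf_flip_ge i t s m hm0
    have := m.isLt
    simp [Fin.last]
    omega
  refine ⟨hlast, ?_⟩
  rw [show reflect i t (reflect i t s) = symmDiff (reflect i t s) (flipSet t ((zeroSet i t (reflect i t s)).min' hne2)) from dif_pos hne2]
  have : (zeroSet i t (reflect i t s)).min' hne2 = m := by
    congr 1 <;> rw [hZeq]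
  rw [this, hrefl]
  exact symmDiff_symmDiff_cancel_right (flipSet t m) s

lemma stepZ_compl (t : ℕ) (s : Finset (Fin t)) (k : ℕ) :
    stepZ t sᶜ k = - stepZ t s k := by
  by_cases hk : k < t
  · simp only [stepZ, dif_pos hk, Finset.mem_compl]
    by_cases h1 : (⟨k,hk⟩ : Fin t) ∈ s <;> simp [h1]
  · simp [stepZ, dif_neg hk]

lemma walkOf_compl (i : ℤ) (t : ℕ) (s : Finset (Fin t)) (j : Fin (t+1)) :
    walkOf i t sᶜ j = 2*i - walkOf i t s j := by
  unfold walkOf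
  rw [show ∑ k ∈ Finset.range (j:ℕ), stepZ t sᶜ k = - ∑ k ∈ Finset.range (j:ℕ), stepZ t s k from by
    rw [← Finset.sum_neg_distrib]; exact Finset.sum_congr rfl (fun k _ => stepZ_compl t s k)]
  ring

lemma card_M_le (i : ℤ) (hi : 1 ≤ i) (t : ℕ) :
    (Finset.univ.filter (fun s : Finset (Fin t) =>
        0 < walkOf i t s (Fin.last t) ∧ walkOf i t s (Fin.last t) ≤ 2*i)).card
      ≤ (Finset.univ.filter (fun s : Finset (Fin t) => ∀ j, 1 ≤ walkOf i t s j)).card := by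
  classical
  set A := Finset.univ.filter (fun s : Finset (Fin t) => ∀ j, 1 ≤ walkOf i t s j) with hA
  set M := Finset.univ.filter (fun s : Finset (Fin t) =>
    0 < walkOf i t s (Fin.last t) ∧ walkOf i t s (Fin.last t) ≤ 2*i) with hM
  set H := Finset.univ.filter (fun s : Finset (Fin t) =>
    (∃ j, walkOf i t s j = 0) ∧ 0 < walkOf i t s (Fin.last t)) with hH
  set L := Finset.univ.filter (fun s : Finset (Fin t) => walkOf i t s (Fin.last t) < 0) with hL
  set L' := Finset.univ.filter (fun s : Finset (Fin t) => 2*i < walkOf i t s (Fin.last t)) with hL'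
  set G := Finset.univ.filter (fun s : Finset (Fin t) => 0 < walkOf i t s (Fin.last t)) with hG
  have hGsub : G ⊆ A ∪ H := by
    intro s hs
    rw [hG, Finset.mem_filter] at hs
    rw [Finset.mem_union, hA, hH, Finset.mem_filter, Finset.mem_filter]
    by_cases hzero : ∃ j, walkOf i t s j = 0
    · exact Or.inr ⟨Finset.mem_univ s, hzero, hs.2⟩
    · push_neg at hzero
      exact Or.inl ⟨Finset.mem_univ s, walkOf_pos i hi t s hzero⟩
  have hdisj : Disjoint M L' := by
    rw [Finset.disjoint_left]
    intro s hs1 hs2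
    rw [hM, Finset.mem_filter] at hs1
    rw [hL', Finset.mem_filter] at hs2
    omega
  have hGeq : G = M ∪ L' := by
    ext s
    rw [hG, hM, hL', Finset.mem_union, Finset.mem_filter, Finset.mem_filter, Finset.mem_filter]
    constructor
    · rintro ⟨h1, h2⟩
      rcases le_or_gt (walkOf i t s (Fin.last t)) (2*i) with h3 | h3
      · exact Or.inl ⟨h1, h2, h3⟩
      · exact Or.inr ⟨h1, h3⟩
    · rintro (⟨h1, h2, _⟩ | ⟨h1, h2⟩)
      · exact ⟨h1, h2⟩
      · refine ⟨h1, lt_trans ?_ h2⟩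
        omega
  have hHL : H.card ≤ L.card := by
    apply Finset.card_le_card_of_injOn (reflect i t)
    · intro s hs
      rw [Finset.mem_coe, hH, Finset.mem_filter] at hs
      obtain ⟨_, hz, hpos⟩ := hs
      rw [Finset.mem_coe, hL, Finset.mem_filter]
      refine ⟨Finset.mem_univ _, ?_⟩
      rw [(reflect_spec i t s hz).1]
      omega
    · intro s1 h1 s2 h2 heq
      rw [Finset.mem_coe, hH, Finset.mem_filter] at h1
      rw [Finset.mem_coe, hH, Finset.mem_filter] at h2
      have e1 := (reflect_spec i t s1 h1.2.1).2
      have e2 := (reflect_spec i t s2 h2.2.1).2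
      rw [← e1, ← e2, heq]
  have hLL' : L.card = L'.card := by
    apply Finset.card_bij (fun s _ => sᶜ)
    · intro s hs
      rw [hL, Finset.mem_filter] at hs
      rw [hL', Finset.mem_filter]
      refine ⟨Finset.mem_univ _, ?_⟩
      rw [walkOf_compl]
      omega
    · intro s1 _ s2 _ heq
      exact compl_injective heq
    · intro s hs
      rw [hL', Finset.mem_filter] at hs
      refine ⟨sᶜ, ?_, compl_compl s⟩
      rw [hL, Finset.mem_filter]
      refine ⟨Finset.mem_univ _, ?_⟩
      rw [walkOf_compl]
      omega
  have h1 : M.card + L'.card = G.card := by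
    rw [hGeq, Finset.card_union_of_disjoint hdisj]
  have h2 : G.card ≤ A.card + H.card :=
    le_trans (Finset.card_le_card hGsub) (Finset.card_union_le _ _)
  omega

lemma walkOf_last (i : ℤ) (t : ℕ) (s : Finset (Fin t)) :
    walkOf i t s (Fin.last t) = i + 2*(s.card:ℤ) - t := by
  unfold walkOf
  have h1 : ((Fin.last t : Fin (t+1)) : ℕ) = t := rfl
  rw [h1, ← Fin.sum_univ_eq_sum_range]
  have h2 : ∀ k : Fin t, stepZ t s (k : ℕ) = (if k ∈ s then (2:ℤ) else 0) - 1 := by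
    intro k
    simp only [stepZ, dif_pos k.isLt, Fin.eta]
    split <;> norm_num
  rw [Finset.sum_congr rfl (fun k _ => h2 k), Finset.sum_sub_distrib, Finset.sum_const,
    Finset.sum_ite_mem, Finset.univ_inter, Finset.sum_const, Finset.card_univ]
  simp [mul_comm]
  ring

lemma card_fiber (t u : ℕ) :
    (Finset.univ.filter (fun s : Finset (Fin t) => s.card = u)).card = t.choose u := by
  rw [← Finset.powerset_univ, ← Finset.powersetCard_eq_filter, Finset.card_powersetCard,
    Finset.card_univ, Fintype.card_fin]

lemma card_M_eq_sum (i t : ℕ) :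
    (Finset.univ.filter (fun s : Finset (Fin t) =>
        0 < walkOf (i:ℤ) t s (Fin.last t) ∧ walkOf (i:ℤ) t s (Fin.last t) ≤ 2*(i:ℤ))).card
      = ∑ u ∈ (Finset.range (t+1)).filter (fun u => t < 2*u + i ∧ 2*u ≤ t + i), t.choose u := by
  classical
  rw [Finset.card_eq_sum_card_fiberwise
    (f := fun s : Finset (Fin t) => s.card)
    (t := (Finset.range (t+1)).filter (fun u => t < 2*u + i ∧ 2*u ≤ t + i)) ?_]
  · apply Finset.sum_congr rfl
    intro u hu
    rw [Finset.mem_filter, Finset.mem_range] at hu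
    rw [← card_fiber t u]
    congr 1
    ext s
    simp only [Finset.mem_filter, Finset.mem_univ, true_and, walkOf_last]
    have hc : s.card ≤ t := by simpa using s.card_le_univ
    constructor
    · rintro ⟨_, h3⟩
      exact h3
    · intro h3
      subst h3
      exact ⟨⟨by push_cast; omega, by push_cast; omega⟩, rfl⟩
  · intro s hs
    rw [Finset.mem_coe, Finset.mem_filter] at hs
    simp only [Finset.mem_coe, Finset.mem_filter, Finset.mem_range]
    obtain ⟨_, h1, h2⟩ := hs
    rw [walkOf_last] at h1 h2
    have hc : s.card ≤ t := by simpa using s.card_le_univ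
    push_cast at h1 h2
    refine ⟨by omega, by omega, by omega⟩

lemma card_S (t i : ℕ) (hi : 1 ≤ i) (hit : i ≤ t+1) :
    ((Finset.range (t+1)).filter (fun u => t < 2*u + i ∧ 2*u ≤ t + i)).card = i := by
  have hbij : ((Finset.range (t+1)).filter (fun u => t < 2*u + i ∧ 2*u ≤ t + i)).card
      = (Finset.range i).card := by
    apply Finset.card_bij' (fun u _ => (t+i)/2 - u) (fun k _ => (t+i)/2 - k)
    · intro u hu
      rw [Finset.mem_filter, Finset.mem_range] at hu
      rw [Finset.mem_range]
      omega
    · intro k hk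
      rw [Finset.mem_range] at hk
      rw [Finset.mem_filter, Finset.mem_range]
      omega
    · intro u hu
      rw [Finset.mem_filter, Finset.mem_range] at hu
      omega
    · intro k hk
      rw [Finset.mem_range] at hk
      omega
  rw [hbij, Finset.card_range]
lemma sum_S_all (t i : ℕ) (hit : t < i) :
    ∑ u ∈ (Finset.range (t+1)).filter (fun u => t < 2*u + i ∧ 2*u ≤ t + i), t.choose u = 2^t := by
  rw [show (Finset.range (t+1)).filter (fun u => t < 2*u + i ∧ 2*u ≤ t + i) = Finset.range (t+1) from ?_]
  · exact Nat.sum_range_choose t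
  · apply Finset.filter_true_of_mem
    intro u hu
    rw [Finset.mem_range] at hu
    omega

/-- For a positive integer `n`, an integer `1 ≤ i ≤ ⌈n/2⌉`, a real
`c > 4`, and a positive integer `t` with `n²/c ≤ t ≤ n²/4`,
`Pr_i^t[MIN(w) ≥ 1] ≥ e^{-1-c} · i / n`. -/
theorem walkProb_min_lower (n i t : ℕ) (c : ℝ) (hn : 0 < n)
    (hi1 : 1 ≤ i) (hi2 : i ≤ (n + 1) / 2) (hc : 4 < c) (ht0 : 0 < t)
    (ht1 : (n : ℝ) ^ 2 / c ≤ (t : ℝ)) (ht2 : (t : ℝ) ≤ (n : ℝ) ^ 2 / 4) :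
    walkProb (i : ℤ) t (fun w => minGE 1 w) ≥ Real.exp (-1 - c) * (i : ℝ) / (n : ℝ) := by
  classical
  have hn2 : 2 ≤ n := by
    by_contra h
    have hn1 : n = 1 := by omega
    subst hn1
    have h1 : (1:ℝ) ≤ t := by exact_mod_cast ht0
    norm_num at ht2
    linarith
  have hc0 : (0:ℝ) < c := by linarith
  have hct : (n:ℝ)^2 ≤ c * t := by
    rw [div_le_iff₀ hc0] at ht1
    linarith
  have hi2' : 2*i ≤ n + 1 := by omega
  set S := (Finset.range (t+1)).filter (fun u => t < 2*u + i ∧ 2*u ≤ t + i) with hS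
  have hsum_le : (∑ u ∈ S, t.choose u : ℕ) ≤ walkCount (i:ℤ) t (fun w => minGE 1 w) := by
    rw [walkCount_eq]
    have e1 : (Finset.univ.filter
          (fun s : Finset (Fin t) => (fun w => minGE 1 w) (walkOf (i:ℤ) t s))).card
        = (Finset.univ.filter
          (fun s : Finset (Fin t) => ∀ j, 1 ≤ walkOf (i:ℤ) t s j)).card := by
      congr 1
      apply Finset.filter_congr
      intro s _
      simp [minGE]
    rw [e1]
    calc (∑ u ∈ S, t.choose u : ℕ)
        = (Finset.univ.filter (fun s : Finset (Fin t) =>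
            0 < walkOf (i:ℤ) t s (Fin.last t) ∧ walkOf (i:ℤ) t s (Fin.last t) ≤ 2*(i:ℤ))).card :=
          (card_M_eq_sum i t).symm
      _ ≤ _ := card_M_le (i:ℤ) (by exact_mod_cast hi1) t
  have hsum_leR : ((∑ u ∈ S, t.choose u : ℕ) : ℝ) ≤ (walkCount (i:ℤ) t (fun w => minGE 1 w) : ℝ) := by
    exact_mod_cast hsum_le
  rw [walkProb, ge_iff_le, div_le_div_iff₀ (by positivity) (by positivity : (0:ℝ) < 2^t)]
  have hn0 : (0:ℝ) < n := by positivity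
  rcases le_or_gt i (t+1) with hit | hit
  · -- main case: |S| = i
    have hScard : S.card = i := card_S t i hi1 hit
    have hper : ∀ u ∈ S, Real.exp (-1-c) / n * 2^t ≤ (t.choose u : ℝ) := by
      intro u hu
      rw [hS, Finset.mem_filter, Finset.mem_range] at hu
      exact choose_bound n i t u c hn2 hi2' hc ht0 hct ht2 (by omega) hu.2.1 hu.2.2
    have hsum_ge := Finset.card_nsmul_le_sum S (fun u => (t.choose u : ℝ))
      (Real.exp (-1-c) / n * 2^t) hper
    rw [hScard, nsmul_eq_mul] at hsum_ge
    have hcast : (∑ u ∈ S, (t.choose u : ℝ)) = ((∑ u ∈ S, t.choose u : ℕ) : ℝ) := by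
      rw [Nat.cast_sum]
    rw [hcast] at hsum_ge
    calc Real.exp (-1-c) * (i:ℝ) * 2^t
        = (i:ℝ) * (Real.exp (-1-c) / n * 2^t) * n := by field_simp
      _ ≤ ((∑ u ∈ S, t.choose u : ℕ) : ℝ) * n := by
          apply mul_le_mul_of_nonneg_right hsum_ge (le_of_lt hn0)
      _ ≤ (walkCount (i:ℤ) t (fun w => minGE 1 w) : ℝ) * n := by
          apply mul_le_mul_of_nonneg_right hsum_leR (le_of_lt hn0)
  · -- degenerate case: t < i, all walks count
    have hsum_all : (∑ u ∈ S, t.choose u : ℕ) = 2^t := sum_S_all t i (by omega)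
    rw [hsum_all] at hsum_leR
    push_cast at hsum_leR
    have hin : (i:ℝ) ≤ n := by
      have : i ≤ n := by omega
      exact_mod_cast this
    have hexp : Real.exp (-1-c) ≤ 1 := by
      rw [Real.exp_le_one_iff]
      linarith
    calc Real.exp (-1-c) * (i:ℝ) * 2^t ≤ 1 * (n:ℝ) * 2^t := by
          apply mul_le_mul_of_nonneg_right _ (by positivity : (0:ℝ) ≤ 2^t)
          apply mul_le_mul hexp hin (by positivity) (by norm_num)
      _ = (2:ℝ)^t * n := by ring
      _ ≤ (walkCount (i:ℤ) t (fun w => minGE 1 w) : ℝ) * n :=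
          mul_le_mul_of_nonneg_right hsum_leR (le_of_lt hn0)
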